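/- For all positive integers n and m, there exists an n × m doubly stochastic array A such that |supp A| = n + m − gcd(n, m). -/
import Mathlib


/-- An `n × m` real matrix is a *doubly stochastic array* if its entries are
nonnegative, each column sums to `n` and each row sums to `m`. -/
def IsDSA (n m : ℕ) (A : Matrix (Fin n) (Fin m) ℝ) : Prop :=
  (∀ i j, 0 ≤ A i j) ∧ (∀ j, ∑ i, A i j = (n : ℝ)) ∧ (∀ i, ∑ j, A i j = (m : ℝ))

/-- An array `A ∈ S(n,m)` is *extremal* if it cannot be written as a convex
combination of two doubly stochastic arrays both different from `A`. -/
def IsExtremal (n m : ℕ) (A : Matrix (Fin n) (Fin m) ℝ) : Prop :=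
  IsDSA n m A ∧ ∀ (B C : Matrix (Fin n) (Fin m) ℝ) (t : ℝ),
    IsDSA n m B → IsDSA n m C → 0 < t → t < 1 →
    A = t • B + (1 - t) • C → B = A ∨ C = A

/-- The support of a matrix: the set of positions of its nonzero entries. -/
def matSupp (n m : ℕ) (A : Matrix (Fin n) (Fin m) ℝ) : Set (Fin n × Fin m) :=
  {p | A p.1 p.2 ≠ 0}

/-- The size of the support of a matrix. -/
noncomputable def suppCard (n m : ℕ) (A : Matrix (Fin n) (Fin m) ℝ) : ℕ :=
  (matSupp n m A).ncard

/-- A subset `Ω` of positions contains a *cycle* if there are `s ≥ 2`, distinct row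
indices `i₁,…,i_s` and distinct column indices `j₁,…,j_s` such that all the pairs
`(i₁,j₁), (i₂,j₁), (i₂,j₂), (i₃,j₂), …, (i_s,j_s), (i₁,j_s)` belong to `Ω`. -/
def ContainsCycle (n m : ℕ) (Ω : Set (Fin n × Fin m)) : Prop :=
  ∃ s : ℕ, 2 ≤ s ∧ ∃ (i : ZMod s → Fin n) (j : ZMod s → Fin m),
    Function.Injective i ∧ Function.Injective j ∧
    ∀ t : ZMod s, (i t, j t) ∈ Ω ∧ (i (t + 1), j t) ∈ Ω

/-- Two matrices are *equivalent* if one is obtained from the other by a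
permutation of rows and a permutation of columns. -/
def MatEquiv (n m : ℕ) (A B : Matrix (Fin n) (Fin m) ℝ) : Prop :=
  ∃ (σ : Equiv.Perm (Fin n)) (τ : Equiv.Perm (Fin m)), ∀ i j, B i j = A (σ i) (τ j)

open Finset

section Aux

/-- the number of blocks `[k*b, (k+1)*b)` -/
lemma block_unique {b t x : ℕ} (hb : 0 < b) (hx : x < t * b) :
    ∀ k : Fin t, ((k : ℕ) * b ≤ x ∧ x < ((k : ℕ) + 1) * b) ↔ (k : ℕ) = x / b := by
  intro k
  constructor
  · rintro ⟨h1, h2⟩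
    exact (Nat.div_eq_of_lt_le h1 h2).symm
  · intro h
    rw [h]
    exact ⟨Nat.div_mul_le_self x b, (Nat.div_lt_iff_lt_mul hb).mp (Nat.lt_succ_self _)⟩

lemma sum_card_inter (b t : ℕ) (hb : 0 < b) (S : Finset ℕ) (hS : ∀ x ∈ S, x < t * b) :
    ∑ k : Fin t, (S ∩ Finset.Ico ((k : ℕ) * b) (((k : ℕ) + 1) * b)).card = S.card := by
  have h1 : ∀ k : Fin t,
      (S ∩ Finset.Ico ((k : ℕ) * b) (((k : ℕ) + 1) * b)).card
        = ∑ x ∈ S, if (k : ℕ) * b ≤ x ∧ x < ((k : ℕ) + 1) * b then 1 else 0 := by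
    intro k
    rw [← Finset.filter_mem_eq_inter, Finset.card_filter]
    refine Finset.sum_congr rfl fun x _ => ?_
    simp [Finset.mem_Ico]
  simp_rw [h1]
  rw [Finset.sum_comm]
  have h2 : ∀ x ∈ S,
      (∑ k : Fin t, if (k : ℕ) * b ≤ x ∧ x < ((k : ℕ) + 1) * b then 1 else 0) = 1 := by
    intro x hx
    have hxb : x / b < t := (Nat.div_lt_iff_lt_mul hb).mpr (hS x hx)
    rw [Finset.sum_eq_single (⟨x / b, hxb⟩ : Fin t)]
    · rw [if_pos]
      exact ((block_unique hb (hS x hx)) ⟨x / b, hxb⟩).mpr rfl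
    · intro k _ hk
      rw [if_neg]
      intro hc
      exact hk (Fin.ext (((block_unique hb (hS x hx)) k).mp hc))
    · intro h; exact absurd (Finset.mem_univ _) h
  calc ∑ x ∈ S, ∑ k : Fin t, (if (k : ℕ) * b ≤ x ∧ x < ((k : ℕ) + 1) * b then 1 else 0)
      = ∑ x ∈ S, 1 := Finset.sum_congr rfl h2
    _ = S.card := by simp

variable (n m : ℕ)

/-- the candidate matrix -/
noncomputable def dsaA : Matrix (Fin n) (Fin m) ℝ :=
  fun i j => ((Finset.Ico ((i : ℕ) * m) (((i : ℕ) + 1) * m)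
    ∩ Finset.Ico ((j : ℕ) * n) (((j : ℕ) + 1) * n)).card : ℝ)

/-- the set of right endpoints -/
def Mset : Finset ℕ :=
  ((Finset.Ico 1 (n + 1)).image (· * m)) ∪ ((Finset.Ico 1 (m + 1)).image (· * n))

lemma Mset_mem {e : ℕ} (he : e ∈ Mset n m) :
    (∃ k, 1 ≤ k ∧ k ≤ n ∧ e = k * m) ∨ (∃ k, 1 ≤ k ∧ k ≤ m ∧ e = k * n) := by
  unfold Mset at he
  rw [Finset.mem_union, Finset.mem_image, Finset.mem_image] at he
  rcases he with ⟨k, hk, rfl⟩ | ⟨k, hk, rfl⟩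
  · rw [Finset.mem_Ico] at hk; exact Or.inl ⟨k, hk.1, by omega, rfl⟩
  · rw [Finset.mem_Ico] at hk; exact Or.inr ⟨k, hk.1, by omega, rfl⟩

lemma Mset_bounds (hn : 0 < n) (hm : 0 < m) {e : ℕ} (he : e ∈ Mset n m) :
    1 ≤ e ∧ e ≤ n * m := by
  rcases Mset_mem n m he with ⟨k, h1, h2, rfl⟩ | ⟨k, h1, h2, rfl⟩
  · exact ⟨Nat.one_le_iff_ne_zero.mpr (by positivity), Nat.mul_le_mul_right m h2⟩
  · constructor
    · exact Nat.one_le_iff_ne_zero.mpr (by positivity)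
    · calc k * n ≤ m * n := Nat.mul_le_mul_right n h2
        _ = n * m := mul_comm m n

lemma div_pred_of_dvd {b e : ℕ} (hb : 0 < b) (he : 1 ≤ e) (hd : b ∣ e) :
    ((e - 1) / b + 1) * b = e := by
  obtain ⟨q, rfl⟩ := hd
  rw [mul_comm b q] at *
  have hq : 1 ≤ q := by by_contra h; push_neg at h; interval_cases q <;> omega
  have h1 : (q - 1) * b = q * b - b := by rw [Nat.sub_mul, one_mul]
  have h2 : (q - 1 + 1) * b = q * b := by rw [Nat.sub_add_cancel hq]
  have h3 : (q * b - 1) / b = q - 1 := Nat.div_eq_of_lt_le (by omega) (by omega)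
  rw [h3, Nat.sub_add_cancel hq]

lemma Mset_inter (hn : 0 < n) (hm : 0 < m) :
    ((Finset.Ico 1 (n + 1)).image (· * m)) ∩ ((Finset.Ico 1 (m + 1)).image (· * n))
      = (Finset.Ico 1 (Nat.gcd n m + 1)).image (· * Nat.lcm n m) := by
  have hlcm : 0 < Nat.lcm n m := Nat.pos_of_ne_zero (Nat.lcm_ne_zero (by omega) (by omega))
  have hgl : Nat.gcd n m * Nat.lcm n m = n * m := Nat.gcd_mul_lcm n m
  ext e
  simp only [Finset.mem_inter, Finset.mem_image, Finset.mem_Ico]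
  constructor
  · rintro ⟨⟨k, ⟨hk1, hk2⟩, rfl⟩, ⟨l, ⟨hl1, hl2⟩, hel⟩⟩
    have hdm : m ∣ k * m := Dvd.intro k (mul_comm m k)
    have hdn : n ∣ k * m := hel ▸ Dvd.intro l (mul_comm n l)
    have hd : Nat.lcm n m ∣ k * m := Nat.lcm_dvd hdn hdm
    obtain ⟨r, hr⟩ := hd
    refine ⟨r, ⟨?_, ?_⟩, by rw [hr, mul_comm]⟩
    · rcases Nat.eq_zero_or_pos r with h | h
      · exfalso; rw [h, mul_zero] at hr; nlinarith
      · omega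
    · have h1 : Nat.lcm n m * r ≤ Nat.lcm n m * Nat.gcd n m := by
        rw [← hr, mul_comm (Nat.lcm n m) (Nat.gcd n m), hgl]
        calc k * m ≤ n * m := Nat.mul_le_mul_right m (by omega)
          _ = n * m := rfl
      have := Nat.le_of_mul_le_mul_left h1 hlcm
      omega
  · rintro ⟨r, ⟨hr1, hr2⟩, rfl⟩
    have hbound : r * Nat.lcm n m ≤ n * m := by
      calc r * Nat.lcm n m ≤ Nat.gcd n m * Nat.lcm n m :=
            Nat.mul_le_mul_right _ (by omega)
        _ = n * m := hgl
    constructor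
    · have hdm : m ∣ r * Nat.lcm n m := Dvd.dvd.mul_left (Nat.dvd_lcm_right n m) r
      obtain ⟨k, hk⟩ := hdm
      refine ⟨k, ⟨?_, ?_⟩, by rw [hk, mul_comm]⟩
      · rcases Nat.eq_zero_or_pos k with h | h
        · exfalso; rw [h, mul_zero] at hk
          have : 0 < r * Nat.lcm n m := by positivity
          omega
        · omega
      · have : m * k ≤ m * n := by rw [← hk, mul_comm m n]; exact hbound
        have := Nat.le_of_mul_le_mul_left this hm
        omega
    · have hdn : n ∣ r * Nat.lcm n m := Dvd.dvd.mul_left (Nat.dvd_lcm_left n m) r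
      obtain ⟨k, hk⟩ := hdn
      refine ⟨k, ⟨?_, ?_⟩, by rw [hk, mul_comm]⟩
      · rcases Nat.eq_zero_or_pos k with h | h
        · exfalso; rw [h, mul_zero] at hk
          have : 0 < r * Nat.lcm n m := by positivity
          omega
        · omega
      · have : n * k ≤ n * m := by rw [← hk]; exact hbound
        have := Nat.le_of_mul_le_mul_left this hn
        omega

lemma Mset_card (hn : 0 < n) (hm : 0 < m) : (Mset n m).card = n + m - Nat.gcd n m := by
  have key := Finset.card_union_add_card_inter
    ((Finset.Ico 1 (n + 1)).image (· * m)) ((Finset.Ico 1 (m + 1)).image (· * n))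
  rw [Mset_inter n m hn hm] at key
  have c1 : ((Finset.Ico 1 (n + 1)).image (· * m)).card = n := by
    rw [Finset.card_image_of_injective _ (mul_left_injective₀ (by omega))]
    simp
  have c2 : ((Finset.Ico 1 (m + 1)).image (· * n)).card = m := by
    rw [Finset.card_image_of_injective _ (mul_left_injective₀ (by omega))]
    simp
  have c3 : ((Finset.Ico 1 (Nat.gcd n m + 1)).image (· * Nat.lcm n m)).card = Nat.gcd n m := by
    rw [Finset.card_image_of_injective _ (mul_left_injective₀
      (Nat.lcm_ne_zero (by omega) (by omega)))]
    simp
  rw [c1, c2, c3] at key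
  have hg : Nat.gcd n m ≤ m := Nat.le_of_dvd hm (Nat.gcd_dvd_right n m)
  unfold Mset
  omega


lemma dsaA_row (hn : 0 < n) (hm : 0 < m) (i : Fin n) : ∑ j, dsaA n m i j = (m : ℝ) := by
  unfold dsaA
  rw [← Nat.cast_sum]
  norm_cast
  rw [sum_card_inter n m hn _ (fun x hx => ?_)]
  · rw [Nat.card_Ico]
    have : ((i : ℕ) + 1) * m = (i : ℕ) * m + m := by ring
    omega
  · rw [Finset.mem_Ico] at hx
    have h1 : ((i : ℕ) + 1) * m ≤ n * m := Nat.mul_le_mul_right m (by omega)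
    have h2 : n * m = m * n := mul_comm n m
    omega

lemma dsaA_col (hn : 0 < n) (hm : 0 < m) (j : Fin m) : ∑ i, dsaA n m i j = (n : ℝ) := by
  unfold dsaA
  rw [← Nat.cast_sum]
  norm_cast
  simp_rw [Finset.inter_comm]
  rw [sum_card_inter m n hm _ (fun x hx => ?_)]
  · rw [Nat.card_Ico]
    have : ((j : ℕ) + 1) * n = (j : ℕ) * n + n := by ring
    omega
  · rw [Finset.mem_Ico] at hx
    have h1 : ((j : ℕ) + 1) * n ≤ m * n := Nat.mul_le_mul_right n (by omega)
    have h2 : m * n = n * m := mul_comm m n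
    omega

/-- the map from right endpoints to support positions -/
def Fmap (hn : 0 < n) (hm : 0 < m) : ℕ → Fin n × Fin m :=
  fun e => (⟨(e - 1) / m % n, Nat.mod_lt _ hn⟩, ⟨(e - 1) / n % m, Nat.mod_lt _ hm⟩)

lemma Fmap_divs (hn : 0 < n) (hm : 0 < m) {e : ℕ} (he : e ∈ Mset n m) :
    (e - 1) / m < n ∧ (e - 1) / n < m := by
  obtain ⟨h1, h2⟩ := Mset_bounds n m hn hm he
  constructor
  · rw [Nat.div_lt_iff_lt_mul hm]; omega
  · rw [Nat.div_lt_iff_lt_mul hn]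
    have : m * n = n * m := mul_comm m n
    omega

lemma Fmap_fst (hn : 0 < n) (hm : 0 < m) {e : ℕ} (he : e ∈ Mset n m) :
    ((Fmap n m hn hm e).1 : ℕ) = (e - 1) / m := by
  exact Nat.mod_eq_of_lt (Fmap_divs n m hn hm he).1

lemma Fmap_snd (hn : 0 < n) (hm : 0 < m) {e : ℕ} (he : e ∈ Mset n m) :
    ((Fmap n m hn hm e).2 : ℕ) = (e - 1) / n := by
  exact Nat.mod_eq_of_lt (Fmap_divs n m hn hm he).2

lemma Fmap_le (hn : 0 < n) (hm : 0 < m) {e e' : ℕ} (he : e ∈ Mset n m) (he' : e' ∈ Mset n m)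
    (h1 : (e - 1) / m = (e' - 1) / m) (h2 : (e - 1) / n = (e' - 1) / n) : e ≤ e' := by
  obtain ⟨hb1, hb2⟩ := Mset_bounds n m hn hm he
  obtain ⟨hb1', hb2'⟩ := Mset_bounds n m hn hm he'
  have hlt1 : e - 1 < ((e - 1) / m + 1) * m :=
    (Nat.div_lt_iff_lt_mul hm).mp (Nat.lt_succ_self _)
  have hlt2 : e - 1 < ((e - 1) / n + 1) * n :=
    (Nat.div_lt_iff_lt_mul hn).mp (Nat.lt_succ_self _)
  rcases Mset_mem n m he' with ⟨k, hk1, hk2, hke⟩ | ⟨k, hk1, hk2, hke⟩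
  · have hd : m ∣ e' := Dvd.intro k (by rw [hke, mul_comm])
    have := div_pred_of_dvd hm hb1' hd
    rw [← h1] at this
    omega
  · have hd : n ∣ e' := Dvd.intro k (by rw [hke, mul_comm])
    have := div_pred_of_dvd hn hb1' hd
    rw [← h2] at this
    omega


lemma supp_eq (hn : 0 < n) (hm : 0 < m) :
    matSupp n m (dsaA n m) = ↑((Mset n m).image (Fmap n m hn hm)) := by
  ext ⟨i, j⟩
  simp only [matSupp, Set.mem_setOf_eq, Finset.coe_image, Set.mem_image, Finset.mem_coe]
  unfold dsaA
  rw [Ne, Nat.cast_eq_zero, ← Ne, ← Nat.pos_iff_ne_zero, Finset.card_pos]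
  constructor
  · rintro ⟨x, hx⟩
    rw [Finset.mem_inter, Finset.mem_Ico, Finset.mem_Ico] at hx
    obtain ⟨⟨hx1, hx2⟩, hx3, hx4⟩ := hx
    set e := min (((i : ℕ) + 1) * m) (((j : ℕ) + 1) * n) with hedef
    have hxe : x < e := lt_min hx2 hx4
    have he1 : 1 ≤ e := by omega
    have heM : e ∈ Mset n m := by
      unfold Mset
      rw [Finset.mem_union, Finset.mem_image, Finset.mem_image]
      rcases le_total (((i : ℕ) + 1) * m) (((j : ℕ) + 1) * n) with h | h
      · exact Or.inl ⟨(i : ℕ) + 1, Finset.mem_Ico.mpr ⟨by omega, by omega⟩,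
          (min_eq_left h).symm⟩
      · exact Or.inr ⟨(j : ℕ) + 1, Finset.mem_Ico.mpr ⟨by omega, by omega⟩,
          (min_eq_right h).symm⟩
    refine ⟨e, heM, ?_⟩
    have hdm : (e - 1) / m = (i : ℕ) := by
      apply Nat.div_eq_of_lt_le
      · omega
      · have := min_le_left (((i : ℕ) + 1) * m) (((j : ℕ) + 1) * n)
        omega
    have hdn : (e - 1) / n = (j : ℕ) := by
      apply Nat.div_eq_of_lt_le
      · omega
      · have := min_le_right (((i : ℕ) + 1) * m) (((j : ℕ) + 1) * n)
        omega
    have h1 := Fmap_fst n m hn hm heM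
    have h2 := Fmap_snd n m hn hm heM
    rw [hdm] at h1
    rw [hdn] at h2
    exact Prod.ext (Fin.ext h1) (Fin.ext h2)
  · rintro ⟨e, heM, hFe⟩
    obtain ⟨hb1, hb2⟩ := Mset_bounds n m hn hm heM
    have h1 : ((i : ℕ)) = (e - 1) / m := by
      rw [← Fmap_fst n m hn hm heM, hFe]
    have h2 : ((j : ℕ)) = (e - 1) / n := by
      rw [← Fmap_snd n m hn hm heM, hFe]
    refine ⟨e - 1, ?_⟩
    rw [Finset.mem_inter, Finset.mem_Ico, Finset.mem_Ico]
    refine ⟨⟨?_, ?_⟩, ?_, ?_⟩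
    · rw [h1]; exact Nat.div_mul_le_self _ _
    · rw [h1]; exact (Nat.div_lt_iff_lt_mul hm).mp (Nat.lt_succ_self _)
    · rw [h2]; exact Nat.div_mul_le_self _ _
    · rw [h2]; exact (Nat.div_lt_iff_lt_mul hn).mp (Nat.lt_succ_self _)

lemma Fmap_injOn (hn : 0 < n) (hm : 0 < m) :
    Set.InjOn (Fmap n m hn hm) ↑(Mset n m) := by
  intro e he e' he' h
  rw [Finset.mem_coe] at he he'
  have h1 : (e - 1) / m = (e' - 1) / m := by
    rw [← Fmap_fst n m hn hm he, ← Fmap_fst n m hn hm he', h]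
  have h2 : (e - 1) / n = (e' - 1) / n := by
    rw [← Fmap_snd n m hn hm he, ← Fmap_snd n m hn hm he', h]
  exact le_antisymm (Fmap_le n m hn hm he he' h1 h2)
    (Fmap_le n m hn hm he' he h1.symm h2.symm)

end Aux

/-- For all positive integers `n, m` there exists an `n × m` doubly
stochastic array whose support has size `n + m − gcd(n,m)`. -/
theorem exists_minimal_support (n m : ℕ) (hn : 0 < n) (hm : 0 < m) :
    ∃ A : Matrix (Fin n) (Fin m) ℝ, IsDSA n m A ∧
      suppCard n m A = n + m - Nat.gcd n m := by
  refine ⟨dsaA n m, ⟨fun i j => Nat.cast_nonneg _, dsaA_col n m hn hm, dsaA_row n m hn hm⟩, ?_⟩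
  unfold suppCard
  rw [supp_eq n m hn hm, Set.ncard_coe_finset,
    Finset.card_image_of_injOn (Fmap_injOn n m hn hm), Mset_card n m hn hm]
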